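/- Let Γ be a finitely generated discrete group acting by homeomorphisms on a compact Hausdorff space X, and suppose the transformation groupoid X⋊Γ has property (T). Then there exists a sequence (a_n), where each a_n is a finitely supported function from Γ to C(X, ℂ), such that for every ε > 0 there is N ∈ ℕ with the following property: for every n ≥ N and every covariant pair (π, u) on any complex Hilbert space H, ‖Σ_{g∈Γ} π(a_n(g)) u_g − P‖ ≤ ε, where P is the orthogonal projection of H onto the closed subspace {ξ ∈ H : u_g ξ = ξ for all g ∈ Γ}. (Specialisation to transformation groupoids of the theorem that a compactly generated groupoid with property (T) admits a Kazhdan projection in its maximal groupoid C*-algebra: since Γ is finitely generated, X⋊Γ is compactly generated, and the Kazhdan projection is a norm limit, uniformly over all representations, of elements of C_c(X⋊Γ).) -/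

import Mathlib

open scoped InnerProductSpace Pointwise


noncomputable section

/-- A covariant pair for the action of a discrete group `Γ` on a compact Hausdorff space
`X`, on a complex Hilbert space `H`: a unital *-homomorphism `π : C(X, ℂ) → B(H)` and a
unitary representation `u` of `Γ` on `H` satisfying the covariance relation
`u_g π(f) u_g⁻¹ = π(x ↦ f(g⁻¹ · x))`. -/
structure CovariantPair (Γ : Type) [Group Γ] (X : Type) [TopologicalSpace X]
    [CompactSpace X] [T2Space X] [MulAction Γ X] [ContinuousConstSMul Γ X]
    (H : Type) [NormedAddCommGroup H] [InnerProductSpace ℂ H] [CompleteSpace H] where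
  π : C(X, ℂ) →⋆ₐ[ℂ] (H →L[ℂ] H)
  u : Γ →* unitary (H →L[ℂ] H)
  covariant : ∀ (g : Γ) (f : C(X, ℂ)),
    (u g : H →L[ℂ] H) * π f * (u g⁻¹ : H →L[ℂ] H) =
      π (f.comp ⟨fun x => g⁻¹ • x, continuous_const_smul g⁻¹⟩)

/-- Property (T) for the transformation groupoid `X ⋊ Γ`, phrased via covariant pairs:
there are a finite `S ⊆ Γ` and `c > 0` such that for every covariant pair `(π, u)` and
every vector `ξ` orthogonal to the `u`-invariant vectors there is a family
`(f_g)_{g ∈ S}` in `C(X, ℂ)` with I-norm at most one and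
`‖Σ_{g ∈ S} π(f_g) u_g ξ − π(Σ_{g ∈ S} f_g) ξ‖ ≥ c ‖ξ‖`. -/
def TransPropT (Γ : Type) [Group Γ] (X : Type) [TopologicalSpace X] [CompactSpace X]
    [T2Space X] [MulAction Γ X] [ContinuousConstSMul Γ X] : Prop :=
  ∃ (S : Finset Γ) (c : ℝ), 0 < c ∧
    ∀ (H : Type) [NormedAddCommGroup H] [InnerProductSpace ℂ H] [CompleteSpace H]
      (cp : CovariantPair Γ X H) (ξ : H),
      (∀ η : H, (∀ g : Γ, (cp.u g : H →L[ℂ] H) η = η) → (inner ℂ η ξ : ℂ) = 0) →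
      ∃ f : Γ → C(X, ℂ),
        (∀ x : X, ∑ g ∈ S, ‖f g x‖ ≤ 1) ∧
        (∀ x : X, ∑ g ∈ S, ‖f g (g • x)‖ ≤ 1) ∧
        c * ‖ξ‖ ≤ ‖(∑ g ∈ S, cp.π (f g) ((cp.u g : H →L[ℂ] H) ξ)) - cp.π (∑ g ∈ S, f g) ξ‖

/-- A `Γ`-invariant Borel probability measure on `X`. -/
def InvariantProbMeasure (Γ : Type) [Group Γ] (X : Type) [TopologicalSpace X]
    [MeasurableSpace X] [MulAction Γ X] (μ : MeasureTheory.Measure X) : Prop :=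
  MeasureTheory.IsProbabilityMeasure μ ∧ ∀ (g : Γ) (A : Set X), MeasurableSet A → μ (g • A) = μ A

lemma op_norm_le_of_inner_bound {H : Type} [NormedAddCommGroup H]
    [InnerProductSpace ℂ H] (T : H →L[ℂ] H) (r : ℝ) (hr : 0 ≤ r)
    (hsym : ∀ x y : H, (inner ℂ (T x) y : ℂ) = inner ℂ x (T y))
    (h0 : ∀ x : H, 0 ≤ (inner ℂ (T x) x : ℂ).re)
    (hb : ∀ x : H, (inner ℂ (T x) x : ℂ).re ≤ r * ‖x‖ ^ 2) :
    ‖T‖ ≤ r := by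
  refine T.opNorm_le_bound hr fun x => ?_
  set y := T x with hy
  have hBsymm : ∀ u v : H, (inner ℂ (T u) v : ℂ).re = (inner ℂ (T v) u : ℂ).re := by
    intro u v
    rw [hsym u v, ← Complex.conj_re, inner_conj_symm]
  have hquad : ∀ t : ℝ, 0 ≤ (inner ℂ (T y) y : ℂ).re * (t * t)
      + (2 * (inner ℂ (T x) y : ℂ).re) * t + (inner ℂ (T x) x : ℂ).re := by
    intro t
    have h := h0 (x + (t : ℂ) • y)
    have hexp : (inner ℂ (T (x + (t : ℂ) • y)) (x + (t : ℂ) • y) : ℂ).re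
        = (inner ℂ (T y) y : ℂ).re * (t * t)
          + (2 * (inner ℂ (T x) y : ℂ).re) * t + (inner ℂ (T x) x : ℂ).re := by
      simp only [map_add, map_smul, inner_add_left, inner_add_right,
        inner_smul_left, inner_smul_right, Complex.add_re, Complex.mul_re,
        Complex.conj_re, Complex.conj_im, Complex.ofReal_re, Complex.ofReal_im]
      rw [hBsymm y x]
      ring
    linarith [hexp ▸ h]
  have hd := discrim_le_zero hquad
  rw [discrim] at hd
  have h1 : (inner ℂ (T x) y : ℂ).re = ‖y‖ ^ 2 := by
    exact inner_self_eq_norm_sq (𝕜 := ℂ) (T x)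
  have h2 : (inner ℂ (T y) y : ℂ).re ≤ r * ‖y‖ ^ 2 := hb y
  have h3 : (inner ℂ (T x) x : ℂ).re ≤ r * ‖x‖ ^ 2 := hb x
  have h4 : 0 ≤ (inner ℂ (T y) y : ℂ).re := h0 y
  have h5 : 0 ≤ (inner ℂ (T x) x : ℂ).re := h0 x
  -- (2‖y‖²)² ≤ 4 * Byy * Bxx ≤ 4 r²‖y‖²‖x‖²
  have key : ‖y‖ ^ 2 * ‖y‖ ^ 2 ≤ r ^ 2 * (‖y‖ ^ 2 * ‖x‖ ^ 2) := by
    nlinarith [mul_le_mul h2 h3 h5 (by positivity : (0:ℝ) ≤ r * ‖y‖ ^ 2)]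
  by_contra hlt
  push_neg at hlt
  have hypos : 0 < ‖y‖ := lt_of_le_of_lt (by positivity) hlt
  have hy2 : ‖y‖ ^ 2 ≤ r ^ 2 * ‖x‖ ^ 2 := by
    have h6 : ‖y‖ ^ 2 * ‖y‖ ^ 2 ≤ ‖y‖ ^ 2 * (r ^ 2 * ‖x‖ ^ 2) := by nlinarith [key]
    exact le_of_mul_le_mul_left h6 (by positivity)
  have h7 : (r * ‖x‖) ^ 2 < ‖y‖ ^ 2 := by
    have := mul_self_lt_mul_self (by positivity) hlt
    nlinarith [this]
  nlinarith [hy2, h7]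


set_option maxHeartbeats 2000000 in
/-- (Existence of Kazhdan projections.)  Let `Γ` be a finitely generated discrete group
acting on a compact Hausdorff space `X`, and suppose the transformation groupoid `X ⋊ Γ`
has property (T).  Then there is a sequence `(a_n)` of finitely supported functions
`Γ → C(X, ℂ)` such that for every `ε > 0` there is `N` with: for every `n ≥ N` and every
covariant pair `(π, u)` on a Hilbert space `H`,
`‖Σ_g π(a_n(g)) u_g − P‖ ≤ ε`, where `P` is the orthogonal projection onto the
`u`-invariant vectors (characterised by `P ξ` being invariant and `ξ − P ξ` being
orthogonal to every invariant vector). -/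
theorem exists_kazhdan_projection_approximants (Γ : Type) [Group Γ] (hfg : Group.FG Γ)
    (X : Type) [TopologicalSpace X] [CompactSpace X] [T2Space X] [MulAction Γ X]
    [ContinuousConstSMul Γ X] (hT : TransPropT Γ X) :
    ∃ a : ℕ → (Γ →₀ C(X, ℂ)),
      ∀ ε > (0 : ℝ), ∃ N : ℕ, ∀ n ≥ N,
        ∀ (H : Type) [NormedAddCommGroup H] [InnerProductSpace ℂ H] [CompleteSpace H]
          (cp : CovariantPair Γ X H) (P : H →L[ℂ] H),
          (∀ ξ : H,
            (∀ g : Γ, (cp.u g : H →L[ℂ] H) (P ξ) = P ξ) ∧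
            (∀ η : H, (∀ g : Γ, (cp.u g : H →L[ℂ] H) η = η) →
              (inner ℂ η (ξ - P ξ) : ℂ) = 0)) →
          ‖(∑ g ∈ (a n).support, cp.π ((a n) g) * (cp.u g : H →L[ℂ] H)) - P‖ ≤ ε := by
  classical
  obtain ⟨S, c, hc, hTp⟩ := hT
  set S₁ : Finset Γ := insert 1 S with hS₁
  set k : ℕ := S₁.card with hk
  have hkpos : 0 < k := Finset.card_pos.mpr ⟨1, Finset.mem_insert_self 1 S⟩
  set r₂ : ℝ := 2⁻¹ with hr₂
  set rκ : ℝ := (4 * (k : ℝ))⁻¹ with hrκ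
  have hrκpos : 0 < rκ := by
    rw [hrκ]
    have : (0:ℝ) < (k : ℝ) := Nat.cast_pos.mpr hkpos
    positivity
  set m₀ : MonoidAlgebra ℂ Γ :=
    (r₂ : ℂ) • 1 + (rκ : ℂ) • ∑ g ∈ S₁,
      (MonoidAlgebra.single g (1 : ℂ) + MonoidAlgebra.single g⁻¹ (1 : ℂ)) with hm₀
  set a : ℕ → (Γ →₀ C(X, ℂ)) :=
    fun n => Finsupp.mapRange (algebraMap ℂ C(X, ℂ)) (map_zero _) (m₀ ^ n).coeff with ha
  set δ : ℝ := c ^ 2 / (4 * (k : ℝ) ^ 2) with hδ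
  have hδpos : 0 < δ := by rw [hδ]; positivity
  set r : ℝ := max (1 - δ) 0 with hr
  have hr0 : 0 ≤ r := le_max_right _ _
  have hr1 : r < 1 := max_lt (by linarith) one_pos
  refine ⟨a, ?_⟩
  intro ε hε
  obtain ⟨N₀, hN₀⟩ := exists_pow_lt_of_lt_one hε hr1
  refine ⟨N₀ + 1, ?_⟩
  intro n hn H _ _ _ cp P hP
  set U : Γ → (H →L[ℂ] H) := fun g => (cp.u g : H →L[ℂ] H) with hU
  set uB : Γ →* (H →L[ℂ] H) := ((unitary (H →L[ℂ] H)).subtype).comp cp.u with huB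
  set φ : MonoidAlgebra ℂ Γ →ₐ[ℂ] (H →L[ℂ] H) :=
    (MonoidAlgebra.lift ℂ (H →L[ℂ] H) Γ) uB with hφ
  set m : H →L[ℂ] H := φ m₀ with hm
  -- basic facts
  have hPinv : ∀ (ξ : H) (g : Γ), U g (P ξ) = P ξ := fun ξ g => (hP ξ).1 g
  have hPorth : ∀ ξ η : H, (∀ g, U g η = η) → (inner ℂ η (ξ - P ξ) : ℂ) = 0 :=
    fun ξ => (hP ξ).2
  -- the explicit form of m
  have hmop : m = (r₂ : ℂ) • 1 + (rκ : ℂ) • ∑ g ∈ S₁, (U g + U g⁻¹) := by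
    rw [hm, hm₀, map_add, map_smul, map_smul, map_one, map_sum]
    congr 2
    refine Finset.sum_congr rfl fun g _ => ?_
    rw [map_add, hφ, MonoidAlgebra.lift_single, MonoidAlgebra.lift_single,
      one_smul, one_smul]
    rfl
  have hmx : ∀ x : H, m x = (r₂ : ℂ) • x + (rκ : ℂ) • ∑ g ∈ S₁, (U g x + U g⁻¹ x) := by
    intro x
    rw [hmop, ContinuousLinearMap.add_apply, ContinuousLinearMap.smul_apply,
      ContinuousLinearMap.smul_apply, ContinuousLinearMap.sum_apply,
      ContinuousLinearMap.one_apply]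
    simp only [ContinuousLinearMap.add_apply]
  -- unitarity
  have husym : ∀ (g : Γ) (x y : H), (inner ℂ (U g x) y : ℂ) = inner ℂ x (U g⁻¹ y) := by
    intro g x y
    have hstar : ContinuousLinearMap.adjoint (U g) = U g⁻¹ := by
      rw [← ContinuousLinearMap.star_eq_adjoint]
      have h1 : star (cp.u g) = cp.u g⁻¹ := by rw [Unitary.star_eq_inv, ← map_inv]
      calc star (U g) = ((star (cp.u g) : unitary (H →L[ℂ] H)) : H →L[ℂ] H) := rfl
        _ = U g⁻¹ := by rw [h1]
    rw [← hstar, ContinuousLinearMap.adjoint_inner_right]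
  have hUinv : ∀ (g : Γ) (x : H), U g⁻¹ (U g x) = x := by
    intro g x
    have h1 : U g⁻¹ * U g = 1 := by
      have : (cp.u g⁻¹) * (cp.u g) = 1 := by rw [← map_mul, inv_mul_cancel, map_one]
      calc U g⁻¹ * U g = (((cp.u g⁻¹) * (cp.u g) : unitary (H →L[ℂ] H)) : H →L[ℂ] H) := rfl
        _ = 1 := by rw [this]; rfl
    calc U g⁻¹ (U g x) = (U g⁻¹ * U g) x := rfl
      _ = x := by rw [h1]; rfl
  have hUnorm : ∀ (g : Γ) (x : H), ‖U g x‖ = ‖x‖ := by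
    intro g x
    have h2 : (inner ℂ (U g x) (U g x) : ℂ) = inner ℂ x x := by rw [husym, hUinv]
    have h3 : ‖U g x‖ ^ 2 = ‖x‖ ^ 2 := by
      rw [← inner_self_eq_norm_sq (𝕜 := ℂ), ← inner_self_eq_norm_sq (𝕜 := ℂ), h2]
    rw [← Real.sqrt_sq (norm_nonneg (U g x)), ← Real.sqrt_sq (norm_nonneg x), h3]
  -- m fixes invariant vectors
  have hkR : (0:ℝ) < (k : ℝ) := Nat.cast_pos.mpr hkpos
  have hknz : ((k : ℝ)) ≠ 0 := Nat.cast_ne_zero.mpr hkpos.ne'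
  have hminv : ∀ x : H, (∀ g, U g x = x) → m x = x := by
    intro x hx
    rw [hmx]
    simp only [hx]
    rw [Finset.sum_const, ← Nat.cast_smul_eq_nsmul ℂ, smul_smul, smul_add,
      ← add_assoc, ← add_smul, ← add_smul]
    have hC : (r₂ : ℂ) + (rκ : ℂ) * (k : ℂ) + (rκ : ℂ) * (k : ℂ) = 1 := by
      have hreal : r₂ + rκ * (k : ℝ) + rκ * (k : ℝ) = 1 := by
        rw [hrκ, hr₂]; field_simp; ring
      have := congrArg (Complex.ofReal) hreal
      push_cast at this ⊢
      convert this using 2 <;> norm_num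
    rw [hC, one_smul]
  have hmP : ∀ ξ : H, m (P ξ) = P ξ := fun ξ => hminv (P ξ) (hPinv ξ)
  have hmsym : ∀ x y : H, (inner ℂ (m x) y : ℂ) = inner ℂ x (m y) := by
    intro x y
    rw [hmx x, hmx y]
    simp only [inner_add_left, inner_add_right, inner_smul_left, inner_smul_right,
      sum_inner, inner_sum, Complex.conj_ofReal]
    congr 2
    refine Finset.sum_congr rfl fun g _ => ?_
    rw [husym g x y, husym g⁻¹ x y, inv_inv, add_comm]
  have hPfix : ∀ η : H, (∀ g, U g η = η) → P η = η := by
    intro η hη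
    have h1 : ∀ g, U g (η - P η) = η - P η := by
      intro g; rw [map_sub, hη g, hPinv η g]
    have h2 := hPorth η (η - P η) h1
    rw [inner_self_eq_zero] at h2
    rw [sub_eq_zero] at h2
    exact h2.symm
  have hPsym : ∀ x y : H, (inner ℂ (P x) y : ℂ) = inner ℂ x (P y) := by
    intro x y
    have h1 : (inner ℂ (P x) (y - P y) : ℂ) = 0 := hPorth y (P x) (hPinv x)
    have h2 : (inner ℂ (P y) (x - P x) : ℂ) = 0 := hPorth x (P y) (hPinv y)
    have h2' : (inner ℂ (x - P x) (P y) : ℂ) = 0 := by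
      rw [← inner_conj_symm, h2, map_zero]
    conv_lhs => rw [show y = P y + (y - P y) by abel]
    rw [inner_add_right, h1, add_zero]
    conv_rhs => rw [show x = P x + (x - P x) by abel]
    rw [inner_add_left, h2', add_zero]
  -- operator identities
  have hmPop : m * P = P := ContinuousLinearMap.ext fun ξ => hmP ξ
  have hPmop : P * m = P := by
    refine ContinuousLinearMap.ext fun ξ => ?_
    refine ext_inner_right ℂ fun y => ?_
    calc (inner ℂ (P (m ξ)) y : ℂ) = inner ℂ (m ξ) (P y) := hPsym _ _
      _ = inner ℂ ξ (m (P y)) := hmsym _ _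
      _ = inner ℂ ξ (P y) := by rw [hmP]
      _ = inner ℂ (P ξ) y := (hPsym _ _).symm
  have hP2op : P * P = P := ContinuousLinearMap.ext fun ξ => hPfix (P ξ) (hPinv ξ)
  have hmnP : ∀ j : ℕ, m ^ j * P = P := by
    intro j
    induction j with
    | zero => simp
    | succ j ih => rw [pow_succ, mul_assoc, hmPop, ih]
  have hTn : ∀ j : ℕ, 1 ≤ j → (m - P) ^ j = m ^ j - P := by
    intro j hj
    induction j with
    | zero => omega
    | succ j ih =>
      rcases Nat.eq_or_lt_of_le hj with h | h
      · simp [← h]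
      · have hj1 : 1 ≤ j := by omega
        rw [pow_succ, ih hj1]
        rw [sub_mul, mul_sub, mul_sub, hmnP, hPmop, hP2op, ← pow_succ]
        abel
  -- the spectral gap
  have hgap : ∀ ζ : H, (∀ η : H, (∀ g, U g η = η) → (inner ℂ η ζ : ℂ) = 0) →
      c ^ 2 / (k : ℝ) * ‖ζ‖ ^ 2 ≤ ∑ g ∈ S₁, ‖U g ζ - ζ‖ ^ 2 := by
    intro ζ hζ
    obtain ⟨f, hf1, -, hf3⟩ := hTp H cp ζ hζ
    have hsplit : (∑ g ∈ S, cp.π (f g) (U g ζ)) - cp.π (∑ g ∈ S, f g) ζ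
        = ∑ g ∈ S, cp.π (f g) (U g ζ - ζ) := by
      rw [map_sum, ContinuousLinearMap.sum_apply, ← Finset.sum_sub_distrib]
      exact Finset.sum_congr rfl fun g _ => (map_sub _ _ _).symm
    have key : c * ‖ζ‖ ≤ ∑ g ∈ S, ‖U g ζ - ζ‖ := by
      refine le_trans hf3 ?_
      rw [hsplit]
      refine le_trans (norm_sum_le _ _) (Finset.sum_le_sum fun g hg => ?_)
      have h4 : ‖cp.π (f g)‖ ≤ 1 := by
        refine le_trans (NonUnitalStarAlgHom.norm_apply_le cp.π (f g)) ?_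
        rw [ContinuousMap.norm_le _ zero_le_one]
        intro x
        have h5 : ‖f g x‖ ≤ ∑ g' ∈ S, ‖f g' x‖ :=
          Finset.single_le_sum (f := fun g' => ‖f g' x‖) (fun _ _ => norm_nonneg _) hg
        exact h5.trans (hf1 x)
      calc ‖cp.π (f g) (U g ζ - ζ)‖ ≤ ‖cp.π (f g)‖ * ‖U g ζ - ζ‖ :=
            ContinuousLinearMap.le_opNorm _ _
        _ ≤ 1 * ‖U g ζ - ζ‖ := mul_le_mul_of_nonneg_right h4 (norm_nonneg _)
        _ = ‖U g ζ - ζ‖ := one_mul _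
    have key2 : c * ‖ζ‖ ≤ ∑ g ∈ S₁, ‖U g ζ - ζ‖ :=
      key.trans (Finset.sum_le_sum_of_subset_of_nonneg (Finset.subset_insert _ _)
        fun g _ _ => norm_nonneg _)
    have hCS := sq_sum_le_card_mul_sum_sq (s := S₁) (f := fun g => ‖U g ζ - ζ‖)
    have h6 : (c * ‖ζ‖) ^ 2 ≤ (∑ g ∈ S₁, ‖U g ζ - ζ‖) ^ 2 :=
      pow_le_pow_left₀ (by positivity) key2 2
    rw [div_mul_eq_mul_div, div_le_iff₀ (Nat.cast_pos.mpr hkpos : (0:ℝ) < (k : ℝ))]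
    calc c ^ 2 * ‖ζ‖ ^ 2 = (c * ‖ζ‖) ^ 2 := by ring
      _ ≤ (∑ g ∈ S₁, ‖U g ζ - ζ‖) ^ 2 := h6
      _ ≤ (k : ℝ) * ∑ g ∈ S₁, ‖U g ζ - ζ‖ ^ 2 := hCS
      _ = (∑ g ∈ S₁, ‖U g ζ - ζ‖ ^ 2) * (k : ℝ) := mul_comm _ _
  -- bounds for m - P
  have hbound : ∀ ξ : H, 0 ≤ (inner ℂ ((m - P) ξ) ξ : ℂ).re ∧
      (inner ℂ ((m - P) ξ) ξ : ℂ).re ≤ r * ‖ξ‖ ^ 2 := by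
    intro ξ
    set ζ : H := ξ - P ξ with hζdef
    have hξ : ξ = P ξ + ζ := by rw [hζdef]; abel
    have hζorth : ∀ η : H, (∀ g, U g η = η) → (inner ℂ η ζ : ℂ) = 0 :=
      fun η hη => hPorth ξ η hη
    have hTξ : (m - P) ξ = m ζ := by
      have hmξ : m ξ = P ξ + m ζ := by
        conv_lhs => rw [hξ]
        rw [map_add, hmP]
      rw [ContinuousLinearMap.sub_apply, hmξ]
      abel
    have hPζ : (inner ℂ (P ξ) ζ : ℂ) = 0 := hζorth (P ξ) (hPinv ξ)
    have hperp : (inner ℂ (m ζ) (P ξ) : ℂ) = 0 := by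
      rw [hmsym, hmP, ← inner_conj_symm, hPζ, map_zero]
    have hre : (inner ℂ ((m - P) ξ) ξ : ℂ).re = (inner ℂ (m ζ) ζ : ℂ).re := by
      rw [hTξ]
      conv_lhs => rw [hξ]
      rw [inner_add_right, hperp, zero_add]
    have hterm : ∀ g : Γ, (inner ℂ (U g ζ) ζ : ℂ).re + (inner ℂ (U g⁻¹ ζ) ζ : ℂ).re
        = 2 * ‖ζ‖ ^ 2 - ‖U g ζ - ζ‖ ^ 2 := by
      intro g
      have he : (inner ℂ (U g⁻¹ ζ) ζ : ℂ).re = (inner ℂ (U g ζ) ζ : ℂ).re := by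
        rw [husym g⁻¹ ζ ζ, inv_inv, ← Complex.conj_re, inner_conj_symm]
      have hn := norm_sub_sq (𝕜 := ℂ) (U g ζ) ζ
      rw [hUnorm g ζ] at hn
      have hre2 : RCLike.re (inner ℂ (U g ζ) ζ : ℂ) = (inner ℂ (U g ζ) ζ : ℂ).re := rfl
      rw [hre2] at hn
      linarith
    have hform : (inner ℂ (m ζ) ζ : ℂ).re
        = ‖ζ‖ ^ 2 - rκ * ∑ g ∈ S₁, ‖U g ζ - ζ‖ ^ 2 := by
      have hip : (inner ℂ (m ζ) ζ : ℂ).re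
          = r₂ * ‖ζ‖ ^ 2 + rκ * ∑ g ∈ S₁,
              ((inner ℂ (U g ζ) ζ : ℂ).re + (inner ℂ (U g⁻¹ ζ) ζ : ℂ).re) := by
        rw [hmx]
        rw [inner_add_left, inner_smul_left, inner_smul_left, sum_inner]
        simp only [inner_add_left, Complex.add_re, Complex.conj_ofReal,
          Complex.re_ofReal_mul, Complex.re_sum]
        have h0 : (inner ℂ ζ ζ : ℂ).re = ‖ζ‖ ^ 2 := inner_self_eq_norm_sq (𝕜 := ℂ) ζ
        rw [h0]
      rw [hip, Finset.sum_congr rfl (fun g _ => hterm g), Finset.sum_sub_distrib,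
        Finset.sum_const, nsmul_eq_mul]
      have hkk : rκ * ((k : ℝ) * (2 * ‖ζ‖ ^ 2)) = 2⁻¹ * ‖ζ‖ ^ 2 := by
        rw [hrκ]
        have h4k : (4 * (k : ℝ)) ≠ 0 := ne_of_gt (by linarith)
        field_simp
        ring
      rw [mul_sub, hkk, hr₂]
      ring
    have hSle : ∑ g ∈ S₁, ‖U g ζ - ζ‖ ^ 2 ≤ (k : ℝ) * (4 * ‖ζ‖ ^ 2) := by
      calc ∑ g ∈ S₁, ‖U g ζ - ζ‖ ^ 2 ≤ ∑ g ∈ S₁, 4 * ‖ζ‖ ^ 2 := by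
            refine Finset.sum_le_sum fun g _ => ?_
            nlinarith [norm_sub_le (U g ζ) ζ, hUnorm g ζ, norm_nonneg ζ,
              norm_nonneg (U g ζ - ζ)]
        _ = (k : ℝ) * (4 * ‖ζ‖ ^ 2) := by rw [Finset.sum_const, nsmul_eq_mul]
    constructor
    · rw [hre, hform]
      have h7 : rκ * ∑ g ∈ S₁, ‖U g ζ - ζ‖ ^ 2 ≤ rκ * ((k : ℝ) * (4 * ‖ζ‖ ^ 2)) :=
        mul_le_mul_of_nonneg_left hSle hrκpos.le
      have h8 : rκ * ((k : ℝ) * (4 * ‖ζ‖ ^ 2)) = ‖ζ‖ ^ 2 := by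
        have h4k : (4 * (k : ℝ)) ≠ 0 := ne_of_gt (by linarith)
        rw [hrκ]; field_simp
      linarith
    · have hg := hgap ζ hζorth
      have h9 : rκ * (c ^ 2 / (k : ℝ) * ‖ζ‖ ^ 2) ≤ rκ * ∑ g ∈ S₁, ‖U g ζ - ζ‖ ^ 2 :=
        mul_le_mul_of_nonneg_left hg hrκpos.le
      have h10 : rκ * (c ^ 2 / (k : ℝ) * ‖ζ‖ ^ 2) = δ * ‖ζ‖ ^ 2 := by
        have h4k : (4 * (k : ℝ)) ≠ 0 := ne_of_gt (by linarith)
        have hkk2 : (4 * (k : ℝ) ^ 2) ≠ 0 := ne_of_gt (by nlinarith)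
        rw [hrκ, hδ]; field_simp
      have h11 : (1 - δ) * ‖ζ‖ ^ 2 ≤ r * ‖ζ‖ ^ 2 :=
        mul_le_mul_of_nonneg_right (le_max_left _ _) (by positivity)
      have hz : (inner ℂ ζ (P ξ) : ℂ) = 0 := by
        rw [← inner_conj_symm, hPζ, map_zero]
      have h13 : ‖ζ‖ ^ 2 = (inner ℂ ζ ξ : ℂ).re := by
        conv_rhs => rw [hξ]
        rw [inner_add_right, hz, zero_add]
        have : RCLike.re (inner ℂ ζ ζ : ℂ) = (inner ℂ ζ ζ : ℂ).re := rfl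
        rw [← this, inner_self_eq_norm_sq]
      have h14 : (inner ℂ ζ ξ : ℂ).re ≤ ‖ζ‖ * ‖ξ‖ := by
        calc (inner ℂ ζ ξ : ℂ).re ≤ ‖(inner ℂ ζ ξ : ℂ)‖ := Complex.re_le_norm _
          _ ≤ ‖ζ‖ * ‖ξ‖ := norm_inner_le_norm ζ ξ
      have hζξ : ‖ζ‖ ≤ ‖ξ‖ := by
        nlinarith [norm_nonneg ζ, norm_nonneg ξ]
      have h12 : r * ‖ζ‖ ^ 2 ≤ r * ‖ξ‖ ^ 2 :=
        mul_le_mul_of_nonneg_left (pow_le_pow_left₀ (norm_nonneg _) hζξ 2) hr0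
      rw [hre, hform]
      linarith
  have hsubsym : ∀ x y : H, (inner ℂ ((m - P) x) y : ℂ) = inner ℂ x ((m - P) y) := by
    intro x y
    simp only [ContinuousLinearMap.sub_apply, inner_sub_left, inner_sub_right,
      hmsym, hPsym]
  have hmp : ‖m - P‖ ≤ r :=
    op_norm_le_of_inner_bound _ r hr0 hsubsym (fun ξ => (hbound ξ).1)
      (fun ξ => (hbound ξ).2)
  -- identification of the sum with m ^ n
  have hsum_eq : (∑ g ∈ (a n).support, cp.π ((a n) g) * U g) = m ^ n := by
    have hsupp : (a n).support ⊆ (m₀ ^ n).coeff.support := by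
      rw [ha]; exact Finsupp.support_mapRange
    have e1 : (∑ g ∈ (a n).support, cp.π ((a n) g) * U g)
        = ∑ g ∈ (m₀ ^ n).coeff.support, cp.π ((a n) g) * U g := by
      refine Finset.sum_subset hsupp fun g _ hg => ?_
      rw [Finsupp.notMem_support_iff.mp hg, map_zero, zero_mul]
    have e2 : ∀ g : Γ, cp.π ((a n) g) = ((m₀ ^ n).coeff g) • 1 := by
      intro g
      have : (a n) g = algebraMap ℂ C(X, ℂ) ((m₀ ^ n).coeff g) := by
        rw [ha]; rfl
      rw [this, AlgHomClass.commutes, Algebra.algebraMap_eq_smul_one]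
    have e3 : m ^ n = φ (m₀ ^ n) := (map_pow φ m₀ n).symm
    rw [e1, e3, hφ, MonoidAlgebra.lift_apply]
    rw [Finsupp.sum]
    refine Finset.sum_congr rfl fun g _ => ?_
    rw [e2, smul_mul_assoc, one_mul]
    rfl
  rw [hsum_eq, show m ^ n - P = (m - P) ^ n from (hTn n (by omega)).symm]
  calc ‖(m - P) ^ n‖ ≤ ‖m - P‖ ^ n := norm_pow_le' _ (by omega)
    _ ≤ r ^ n := pow_le_pow_left₀ (norm_nonneg _) hmp n
    _ ≤ r ^ N₀ := pow_le_pow_of_le_one hr0 hr1.le (by omega)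
    _ ≤ ε := hN₀.le

end
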